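/- Let N ≥ 3 be a natural number. If the tail ∑_{k=N+1}^∞ 1/(k · log k · (log log k)²) is less than 0.1, then N + 1 > e^{e^{10}}. -/

import Mathlib

open Real Filter


private lemma logpos {x : ℝ} (hx : Real.exp 1 < x) : 1 < Real.log x := by
  have hx0 : 0 < x := (Real.exp_pos 1).trans hx
  rwa [Real.lt_log_iff_exp_lt hx0]

private lemma hasDerivG {x : ℝ} (hx : Real.exp 1 < x) :
    HasDerivAt (fun y => -(Real.log (Real.log y))⁻¹)
      (1 / (x * Real.log x * (Real.log (Real.log x))^2)) x := by
  have hx0 : 0 < x := (Real.exp_pos 1).trans hx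
  have hlx : 1 < Real.log x := logpos hx
  have hlx0 : 0 < Real.log x := zero_lt_one.trans hlx
  have hllx : 0 < Real.log (Real.log x) := Real.log_pos hlx
  have h1 : HasDerivAt Real.log (x⁻¹) x := Real.hasDerivAt_log hx0.ne'
  have h2 : HasDerivAt (fun y => Real.log (Real.log y)) ((Real.log x)⁻¹ * x⁻¹) x :=
    (Real.hasDerivAt_log hlx0.ne').comp x h1
  have h3 := (h2.inv hllx.ne').neg
  convert h3 using 1
  all_goals try rfl
  field_simp

private lemma denom_mono {x y : ℝ} (hx : Real.exp 1 < x) (hxy : x ≤ y) :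
    x * Real.log x * (Real.log (Real.log x))^2 ≤ y * Real.log y * (Real.log (Real.log y))^2 := by
  have hx0 : 0 < x := (Real.exp_pos 1).trans hx
  have hlx : 1 < Real.log x := logpos hx
  have hllx : 0 < Real.log (Real.log x) := Real.log_pos hlx
  have h1 : Real.log x ≤ Real.log y := Real.log_le_log hx0 hxy
  have h2 : Real.log (Real.log x) ≤ Real.log (Real.log y) :=
    Real.log_le_log (zero_lt_one.trans hlx) h1
  have s1 : x * Real.log x ≤ y * Real.log y :=
    mul_le_mul hxy h1 (zero_lt_one.trans hlx).le (hx0.le.trans hxy)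
  have s2 : (Real.log (Real.log x))^2 ≤ (Real.log (Real.log y))^2 :=
    pow_le_pow_left₀ hllx.le h2 2
  exact mul_le_mul s1 s2 (sq_nonneg _)
    (mul_nonneg (hx0.le.trans hxy) ((zero_lt_one.trans hlx).le.trans h1))

private lemma mvt {a : ℝ} (ha : Real.exp 1 < a) :
    ∃ c ∈ Set.Ioo a (a+1),
      (Real.log (Real.log a))⁻¹ - (Real.log (Real.log (a+1)))⁻¹
        = 1 / (c * Real.log c * (Real.log (Real.log c))^2) := by
  have hcont : ContinuousOn (fun y => -(Real.log (Real.log y))⁻¹) (Set.Icc a (a+1)) := by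
    intro x hx
    exact (hasDerivG (lt_of_lt_of_le ha hx.1)).continuousAt.continuousWithinAt
  obtain ⟨c, hc, hd⟩ := exists_hasDerivAt_eq_slope (fun y => -(Real.log (Real.log y))⁻¹)
    (fun x => 1 / (x * Real.log x * (Real.log (Real.log x))^2)) (by linarith) hcont
    (fun x hx => hasDerivG (lt_of_lt_of_le ha hx.1.le))
  refine ⟨c, hc, ?_⟩
  rw [hd]
  ring_nf

private lemma denom_pos {x : ℝ} (hx : Real.exp 1 < x) :
    0 < x * Real.log x * (Real.log (Real.log x))^2 := by
  have hx0 : 0 < x := (Real.exp_pos 1).trans hx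
  have hlx : 1 < Real.log x := logpos hx
  have hll : 0 < Real.log (Real.log x) := Real.log_pos hlx
  exact mul_pos (mul_pos hx0 (zero_lt_one.trans hlx)) (pow_pos hll 2)

private lemma lowerB {a : ℝ} (ha : Real.exp 1 < a) :
    (Real.log (Real.log a))⁻¹ - (Real.log (Real.log (a+1)))⁻¹
      ≤ 1 / (a * Real.log a * (Real.log (Real.log a))^2) := by
  obtain ⟨c, hc, he⟩ := mvt ha
  rw [he]
  exact one_div_le_one_div_of_le (denom_pos ha) (denom_mono ha hc.1.le)

private lemma upperB {a : ℝ} (ha : Real.exp 1 < a) :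
    1 / ((a+1) * Real.log (a+1) * (Real.log (Real.log (a+1)))^2)
      ≤ (Real.log (Real.log a))⁻¹ - (Real.log (Real.log (a+1)))⁻¹ := by
  obtain ⟨c, hc, he⟩ := mvt ha
  rw [he]
  exact one_div_le_one_div_of_le (denom_pos (ha.trans hc.1)) (denom_mono (ha.trans hc.1) hc.2.le)


/-- If the tail `∑_{k=N+1}^∞ 1/(k log k (log log k)²)` is less than `0.1`,
then `N + 1 > e^(e^10)`. -/
theorem tail_small_implies_huge (N : ℕ) (hN : 3 ≤ N)
    (h : (∑' k : ℕ, 1 / (((N : ℝ) + 1 + k) * Real.log ((N : ℝ) + 1 + k) *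
        (Real.log (Real.log ((N : ℝ) + 1 + k))) ^ 2)) < 0.1) :
    Real.exp (Real.exp 10) < (N : ℝ) + 1 := by
  by_contra hcon
  push_neg at hcon
  have he3 : Real.exp 1 < 3 := by
    have := Real.exp_one_lt_d9; norm_num at this ⊢; linarith
  have hN3 : (3:ℝ) ≤ (N:ℝ) := by exact_mod_cast hN
  set f : ℕ → ℝ := fun k => 1 / (((N : ℝ) + 1 + k) * Real.log ((N : ℝ) + 1 + k) *
        (Real.log (Real.log ((N : ℝ) + 1 + k))) ^ 2) with hf
  have hbk : ∀ k : ℕ, Real.exp 1 < (N:ℝ) + k := by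
    intro k
    have : (0:ℝ) ≤ (k:ℝ) := Nat.cast_nonneg k
    linarith
  have hbk1 : ∀ k : ℕ, Real.exp 1 < (N:ℝ) + 1 + k := by
    intro k
    have := hbk k; linarith
  have hfnn : ∀ k, 0 ≤ f k := fun k =>
    le_of_lt (div_pos one_pos (denom_pos (hbk1 k)))
  set u : ℕ → ℝ := fun k => (Real.log (Real.log ((N:ℝ)+k)))⁻¹ with hu
  set v : ℕ → ℝ := fun k => (Real.log (Real.log ((N:ℝ)+1+k)))⁻¹ with hv
  have hub : ∀ k : ℕ, f k ≤ u k - u (k+1) := by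
    intro k
    have h1 := upperB (hbk k)
    have e1 : (N:ℝ) + k + 1 = (N:ℝ) + 1 + k := by ring
    have e2 : (N:ℝ) + (k+1:ℕ) = (N:ℝ) + 1 + k := by push_cast; ring
    simp only [hf, hu, e2]
    rw [e1] at h1
    exact h1
  have hlb : ∀ k : ℕ, v k - v (k+1) ≤ f k := by
    intro k
    have h1 := lowerB (hbk1 k)
    have e2 : (N:ℝ) + 1 + (k+1:ℕ) = (N:ℝ) + 1 + k + 1 := by push_cast; ring
    simp only [hf, hv, e2]
    exact h1
  have hsummable : Summable f := by
    apply summable_of_sum_range_le hfnn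
    intro n
    calc ∑ k ∈ Finset.range n, f k
        ≤ ∑ k ∈ Finset.range n, (u k - u (k+1)) :=
          Finset.sum_le_sum (fun k _ => hub k)
      _ = u 0 - u n := Finset.sum_range_sub' u n
      _ ≤ u 0 := by
          have : 0 ≤ u n := by
            have := Real.log_pos (logpos (hbk n))
            simp only [hu]
            positivity
          linarith
  have htsum_lb : ∀ n : ℕ, v 0 - v n ≤ ∑' k, f k := by
    intro n
    have h1 : ∑ k ∈ Finset.range n, (v k - v (k+1)) = v 0 - v n :=
      Finset.sum_range_sub' v n
    have h2 : ∑ k ∈ Finset.range n, (v k - v (k+1)) ≤ ∑ k ∈ Finset.range n, f k :=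
      Finset.sum_le_sum (fun k _ => hlb k)
    have h3 : ∑ k ∈ Finset.range n, f k ≤ ∑' k, f k :=
      hsummable.sum_le_tsum _ (fun i _ => hfnn i)
    linarith
  have hv0 : Tendsto v atTop (nhds 0) := by
    have t1 : Tendsto (fun n : ℕ => (N:ℝ) + 1 + n) atTop atTop :=
      tendsto_atTop_add_const_left _ _ tendsto_natCast_atTop_atTop
    exact (Real.tendsto_log_atTop.comp (Real.tendsto_log_atTop.comp t1)).inv_tendsto_atTop
  have hmain : v 0 ≤ ∑' k, f k := by
    have t2 : Tendsto (fun n => v 0 - v n) atTop (nhds (v 0)) := by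
      have := (tendsto_const_nhds (x := v 0) (f := atTop)).sub hv0
      simpa using this
    exact le_of_tendsto t2 (Filter.Eventually.of_forall htsum_lb)
  -- now v 0 ≥ 0.1
  have hNpos : (0:ℝ) < (N:ℝ) + 1 := by linarith
  have hlog1 : Real.log ((N:ℝ)+1) ≤ Real.exp 10 := by
    calc Real.log ((N:ℝ)+1) ≤ Real.log (Real.exp (Real.exp 10)) :=
          Real.log_le_log hNpos hcon
      _ = Real.exp 10 := Real.log_exp _
  have hlog2 : Real.log (Real.log ((N:ℝ)+1)) ≤ 10 := by
    calc Real.log (Real.log ((N:ℝ)+1)) ≤ Real.log (Real.exp 10) := by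
          apply Real.log_le_log _ hlog1
          have := logpos (show Real.exp 1 < (N:ℝ)+1 by linarith)
          linarith
      _ = 10 := Real.log_exp _
  have hllpos : 0 < Real.log (Real.log ((N:ℝ)+1)) :=
    Real.log_pos (logpos (show Real.exp 1 < (N:ℝ)+1 by linarith))
  have hv0val : (10:ℝ)⁻¹ ≤ v 0 := by
    simp only [hv, Nat.cast_zero, add_zero]
    exact inv_anti₀ hllpos hlog2
  have : (10:ℝ)⁻¹ ≤ ∑' k, f k := le_trans hv0val hmain
  rw [hf] at this
  norm_num at this h
  linarith
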